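/- (Quadratic games: joint convexity of the regularized NI function.) Let θ_i(x) = (1/2)x_iᵀ A_{ii} x_i + Σ_{l≠i} x_lᵀ A_{li} x_i for i = 1,…,N, with A_{ii} symmetric, and let C be the block matrix with diagonal blocks (1/2)A_{ii} and off-diagonal blocks A_{li}. Suppose C + Cᵀ is positive definite with smallest eigenvalue δ > 0, and let 0 < a ≤ δ. Then the regularized Nikaido–Isoda function ψ_a(x,y) = Σ_i[θ_i(x_{-i},x_i) − θ_i(x_{-i},y_i) − (a/2)‖x_i − y_i‖²] is convex in x for each fixed y ∈ ℝⁿ. -/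

import Mathlib

/-- Polar of a set in a real inner product space. -/
def polarSet {E : Type*} [NormedAddCommGroup E] [InnerProductSpace ℝ E] (S : Set E) : Set E :=
  {v | ∀ z ∈ S, (inner ℝ v z : ℝ) ≤ 0}

/-- Normal cone to a set `X` at a point `x`. -/
def normalCone {E : Type*} [NormedAddCommGroup E] [InnerProductSpace ℝ E]
    (X : Set E) (x : E) : Set E :=
  {v | ∀ z ∈ X, (inner ℝ v (z - x) : ℝ) ≤ 0}

/-- Tangent cone: polar of the normal cone. -/
def tangentConeSet {E : Type*} [NormedAddCommGroup E] [InnerProductSpace ℝ E]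
    (X : Set E) (x : E) : Set E :=
  polarSet (normalCone X x)

/-- The regularized Nikaido–Isoda function of a GNEP with loss functions `θ i`:
`ψ_a(x,y) = Σ_i [θ_i(x) − θ_i(x_{-i},y_i) − (a/2)‖x_i − y_i‖²]`. -/
noncomputable def psiReg {N : ℕ} {d : Fin N → ℕ}
    (θ : Fin N → (PiLp 2 fun i => EuclideanSpace ℝ (Fin (d i))) → ℝ) (a : ℝ)
    (x y : PiLp 2 fun i => EuclideanSpace ℝ (Fin (d i))) : ℝ :=
  ∑ i, (θ i x - θ i (WithLp.toLp 2 (Function.update x i (y i))) - a / 2 * ‖x i - y i‖ ^ 2)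

/-- The VI operator `F(x) = (∇_{x_i} θ_i(x))_i` of a jointly convex GNEP. -/
noncomputable def gnepF {N : ℕ} {d : Fin N → ℕ}
    (θ : Fin N → (PiLp 2 fun i => EuclideanSpace ℝ (Fin (d i))) → ℝ)
    (x : PiLp 2 fun i => EuclideanSpace ℝ (Fin (d i))) :
    PiLp 2 fun i => EuclideanSpace ℝ (Fin (d i)) :=
  WithLp.toLp 2 fun i => gradient (fun zi => θ i (WithLp.toLp 2 (Function.update x i zi))) (x i)

open Matrix in
/-- `q(x) = xᵀ C x` where `C` is the block matrix with diagonal blocks `(1/2)A_{ii}`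
and off-diagonal blocks `A_{li}`. -/
noncomputable def blockQuadForm {N : ℕ} {d : Fin N → ℕ}
    (A : ∀ l i : Fin N, Matrix (Fin (d l)) (Fin (d i)) ℝ)
    (x : PiLp 2 fun i => EuclideanSpace ℝ (Fin (d i))) : ℝ :=
  ∑ i, ((1 / 2) * (x i ⬝ᵥ (A i i).mulVec (x i)) +
    ∑ l ∈ Finset.univ.erase i, (x l ⬝ᵥ (A l i).mulVec (x i)))

open Matrix

lemma normsq_dot {n : ℕ} (v : EuclideanSpace ℝ (Fin n)) : ‖v‖^2 = v ⬝ᵥ v := by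
  rw [EuclideanSpace.norm_sq_eq]
  simp [dotProduct, sq]

lemma keyIdent {N : ℕ} {d : Fin N → ℕ}
    (A : ∀ l i : Fin N, Matrix (Fin (d l)) (Fin (d i)) ℝ)
    (x z y : ∀ i, Fin (d i) → ℝ) (i : Fin N) (a t s : ℝ) (hts : t + s = 1) :
    t * ((1/2) * (x i ⬝ᵥ (A i i).mulVec (x i)) + ∑ l ∈ Finset.univ.erase i, x l ⬝ᵥ (A l i).mulVec (x i)
       - ((1/2) * (y i ⬝ᵥ (A i i).mulVec (y i)) + ∑ l ∈ Finset.univ.erase i, x l ⬝ᵥ (A l i).mulVec (y i))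
       - a/2 * ((x i - y i) ⬝ᵥ (x i - y i)))
    + s * ((1/2) * (z i ⬝ᵥ (A i i).mulVec (z i)) + ∑ l ∈ Finset.univ.erase i, z l ⬝ᵥ (A l i).mulVec (z i)
       - ((1/2) * (y i ⬝ᵥ (A i i).mulVec (y i)) + ∑ l ∈ Finset.univ.erase i, z l ⬝ᵥ (A l i).mulVec (y i))
       - a/2 * ((z i - y i) ⬝ᵥ (z i - y i)))
    - ((1/2) * ((t • x i + s • z i) ⬝ᵥ (A i i).mulVec (t • x i + s • z i))
       + ∑ l ∈ Finset.univ.erase i, (t • x l + s • z l) ⬝ᵥ (A l i).mulVec (t • x i + s • z i)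
       - ((1/2) * (y i ⬝ᵥ (A i i).mulVec (y i)) + ∑ l ∈ Finset.univ.erase i, (t • x l + s • z l) ⬝ᵥ (A l i).mulVec (y i))
       - a/2 * ((t • x i + s • z i - y i) ⬝ᵥ (t • x i + s • z i - y i)))
    = t * s * ((1/2) * ((x i - z i) ⬝ᵥ (A i i).mulVec (x i - z i))
       + ∑ l ∈ Finset.univ.erase i, (x l - z l) ⬝ᵥ (A l i).mulVec (x i - z i)
       - a/2 * ((x i - z i) ⬝ᵥ (x i - z i))) := by
  have hs : s = 1 - t := by linarith
  subst hs
  simp only [Matrix.mulVec_add, Matrix.mulVec_smul, Matrix.mulVec_sub, dotProduct_add,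
    dotProduct_sub, dotProduct_smul, add_dotProduct, sub_dotProduct, smul_dotProduct,
    smul_eq_mul, Finset.sum_add_distrib, Finset.sum_sub_distrib, ← Finset.mul_sum]
  ring


open Matrix in
theorem stmt16 {N : ℕ} {d : Fin N → ℕ}
    (A : ∀ l i : Fin N, Matrix (Fin (d l)) (Fin (d i)) ℝ)
    (hsym : ∀ i, (A i i).IsSymm)
    (θ : Fin N → (PiLp 2 fun i => EuclideanSpace ℝ (Fin (d i))) → ℝ)
    (hθ : ∀ i x, θ i x = (1 / 2) * (x i ⬝ᵥ (A i i).mulVec (x i)) +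
      ∑ l ∈ Finset.univ.erase i, (x l ⬝ᵥ (A l i).mulVec (x i)))
    (δ : ℝ) (hδ : 0 < δ)
    -- `C + Cᵀ` is positive definite, with smallest eigenvalue `δ`:
    -- `xᵀ(C + Cᵀ)x = 2 xᵀ C x ≥ δ‖x‖²`, with equality attained at some eigenvector.
    (hpos : ∀ x : PiLp 2 fun i => EuclideanSpace ℝ (Fin (d i)),
      δ * ‖x‖ ^ 2 ≤ 2 * blockQuadForm A x)
    (hattain : ∃ x : PiLp 2 fun i => EuclideanSpace ℝ (Fin (d i)),
      x ≠ 0 ∧ 2 * blockQuadForm A x = δ * ‖x‖ ^ 2)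
    (a : ℝ) (ha : 0 < a) (haδ : a ≤ δ) :
    ∀ y, ConvexOn ℝ Set.univ (fun x => psiReg θ a x y) := by
  intro y
  refine ⟨convex_univ, fun x _ z _ t s ht hs hts => ?_⟩
  have hnorm : ‖x - z‖^2 = ∑ i, ((x - z) i ⬝ᵥ (x - z) i) := by
    rw [PiLp.norm_sq_eq_of_L2]
    exact Finset.sum_congr rfl fun i _ => normsq_dot _
  have key : t * psiReg θ a x y + s * psiReg θ a z y - psiReg θ a (t•x+s•z) y
      = t * s * (blockQuadForm A (x - z) - a/2 * ‖x - z‖^2) := by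
    have hupd : ∀ (w : PiLp 2 fun i => EuclideanSpace ℝ (Fin (d i))) (i : Fin N),
        ∑ l ∈ Finset.univ.erase i, ((Function.update w i (y i)) l ⬝ᵥ (A l i).mulVec (y i)) =
        ∑ l ∈ Finset.univ.erase i, (w l ⬝ᵥ (A l i).mulVec (y i)) := fun w i =>
      Finset.sum_congr rfl fun l hl => by rw [Function.update_of_ne (Finset.ne_of_mem_erase hl)]
    simp only [psiReg, blockQuadForm, hθ, WithLp.ofLp_toLp, Function.update_self, normsq_dot, hnorm]
    rw [Finset.mul_sum, Finset.mul_sum, ← Finset.sum_add_distrib, ← Finset.sum_sub_distrib,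
      Finset.mul_sum, ← Finset.sum_sub_distrib, Finset.mul_sum]
    refine Finset.sum_congr rfl fun i _ => ?_
    rw [hupd x i, hupd z i, hupd (t•x+s•z) i]
    exact keyIdent A (fun i => (x i).ofLp) (fun i => (z i).ofLp) (fun i => (y i).ofLp) i a t s hts
  have hQ : 0 ≤ blockQuadForm A (x - z) - a/2 * ‖x - z‖^2 := by
    have h1 := hpos (x - z)
    nlinarith [sq_nonneg ‖x - z‖]
  have := mul_nonneg (mul_nonneg ht hs) hQ
  simp only [smul_eq_mul]
  nlinarith [key]
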